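/- There exists a universal constant C₀ > 0 with the following property. Let K ≥ 1, A > 0, d > 0, let α, β : [0,∞) → ℂ be continuous with |α(t)| ≤ A/(1+t) and |β(t)| ≤ d/(1+Kt)² for all t ≥ 0, and let ρ : [0,∞) → ℂ be continuous and satisfy the Volterra equation ρ(t) = α(t) + ∫₀ᵗ β(t−τ) ρ(τ) dτ for all t ≥ 0. If C₀ d < K, then there exists M > 0 such that |ρ(t)| ≤ M/(1+t) for all t ≥ 0. -/

import Mathlib

open MeasureTheory Real intervalIntegral

lemma volterra_kernel_integral_le (K t : ℝ) (hK : 1 ≤ K) (ht : 0 ≤ t) :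
    (∫ τ in (0:ℝ)..t, (1 + t) / ((1 + K * (t - τ)) ^ 2 * (1 + τ))) ≤ 4 / K := by
  have hK0 : (0:ℝ) < K := lt_of_lt_of_le one_pos hK
  set f : ℝ → ℝ := fun τ => (1 + t) / ((1 + K * (t - τ)) ^ 2 * (1 + τ)) with hf
  have hden : ∀ τ ∈ Set.Icc (0:ℝ) t, (0:ℝ) < (1 + K * (t - τ)) ^ 2 * (1 + τ) := by
    intro τ hτ
    have h1 : 0 ≤ t - τ := by linarith [hτ.2]
    have h2 : (0:ℝ) < 1 + K * (t - τ) := by nlinarith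
    have h3 : (0:ℝ) < 1 + τ := by linarith [hτ.1]
    positivity
  have hfc : ContinuousOn f (Set.Icc 0 t) := by
    apply ContinuousOn.div continuousOn_const (by fun_prop)
    exact fun τ hτ => (hden τ hτ).ne'
  have hsub1 : Set.Icc (0:ℝ) (t/2) ⊆ Set.Icc 0 t := Set.Icc_subset_Icc le_rfl (by linarith)
  have hsub2 : Set.Icc (t/2) t ⊆ Set.Icc 0 t := Set.Icc_subset_Icc (by linarith) le_rfl
  have hint1 : IntervalIntegrable f volume 0 (t/2) := by
    apply ContinuousOn.intervalIntegrable
    rw [Set.uIcc_of_le (by linarith : (0:ℝ) ≤ t/2)]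
    exact hfc.mono hsub1
  have hint2 : IntervalIntegrable f volume (t/2) t := by
    apply ContinuousOn.intervalIntegrable
    rw [Set.uIcc_of_le (by linarith : t/2 ≤ t)]
    exact hfc.mono hsub2
  rw [← intervalIntegral.integral_add_adjacent_intervals hint1 hint2]
  have hA : (∫ τ in (0:ℝ)..(t/2), f τ) ≤ 2 / K := by
    have hDpos : (0:ℝ) < (1 + K * (t/2)) ^ 2 := by positivity
    have hmono : (∫ τ in (0:ℝ)..(t/2), f τ)
        ≤ ∫ _τ in (0:ℝ)..(t/2), (1 + t) / (1 + K * (t/2)) ^ 2 := by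
      apply intervalIntegral.integral_mono_on (by linarith) hint1 intervalIntegrable_const
      intro τ hτ
      have h1 : t/2 ≤ t - τ := by linarith [hτ.2]
      have h2 : (0:ℝ) ≤ 1 + K * (t/2) := by positivity
      have h5 : 1 + K * (t/2) ≤ 1 + K * (t - τ) := by nlinarith
      have h6 : (1 + K * (t/2)) ^ 2 ≤ (1 + K * (t - τ)) ^ 2 := by nlinarith
      have h4 : (1 + K * (t/2)) ^ 2 ≤ (1 + K * (t - τ)) ^ 2 * (1 + τ) := by
        nlinarith [mul_nonneg (sq_nonneg (1 + K * (t - τ))) hτ.1]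
      exact div_le_div_of_nonneg_left (by linarith) hDpos h4
    refine hmono.trans ?_
    rw [intervalIntegral.integral_const, smul_eq_mul, sub_zero, ← mul_div_assoc]
    rw [div_le_div_iff₀ hDpos hK0]
    nlinarith [sq_nonneg t, mul_nonneg (sub_nonneg.2 hK) (sq_nonneg t)]
  have hB : (∫ τ in (t/2)..t, f τ) ≤ 2 / K := by
    set g : ℝ → ℝ := fun τ => 2 / (1 + K * (t - τ)) ^ 2 with hg
    have hgpos : ∀ τ ∈ Set.Icc (t/2) t, (0:ℝ) < 1 + K * (t - τ) := by
      intro τ hτ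
      have h1 : 0 ≤ t - τ := by linarith [hτ.2]
      nlinarith
    have hgc : ContinuousOn g (Set.Icc (t/2) t) := by
      apply ContinuousOn.div continuousOn_const (by fun_prop)
      exact fun τ hτ => (pow_pos (hgpos τ hτ) 2).ne'
    have hgint : IntervalIntegrable g volume (t/2) t := by
      apply ContinuousOn.intervalIntegrable
      rwa [Set.uIcc_of_le (by linarith : t/2 ≤ t)]
    have hmono : (∫ τ in (t/2)..t, f τ) ≤ ∫ τ in (t/2)..t, g τ := by
      apply intervalIntegral.integral_mono_on (by linarith) hint2 hgint
      intro τ hτ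
      have h1 : (0:ℝ) < 1 + K * (t - τ) := hgpos τ hτ
      have h3 : (0:ℝ) < 1 + τ := by linarith [hτ.1, ht]
      show (1 + t) / ((1 + K * (t - τ)) ^ 2 * (1 + τ)) ≤ 2 / (1 + K * (t - τ)) ^ 2
      rw [div_le_div_iff₀ (by positivity) (by positivity)]
      nlinarith [mul_nonneg (sq_nonneg (1 + K * (t - τ)))
        (show (0:ℝ) ≤ 2*(1+τ)-(1+t) by linarith [hτ.1])]
    have hFTC : (∫ τ in (t/2)..t, g τ)
        = (fun τ => (2/K) * (1 + K*(t - τ))⁻¹) t - (fun τ => (2/K) * (1 + K*(t - τ))⁻¹) (t/2) := by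
      refine intervalIntegral.integral_eq_sub_of_hasDerivAt
        (f := fun τ => (2/K) * (1 + K*(t - τ))⁻¹) ?_ hgint
      intro τ hτ
      rw [Set.uIcc_of_le (by linarith : t/2 ≤ t)] at hτ
      have h1 : (0:ℝ) < 1 + K * (t - τ) := hgpos τ hτ
      have hd1 : HasDerivAt (fun τ : ℝ => 1 + K * (t - τ)) (K * (-1)) τ :=
        (((hasDerivAt_id τ).const_sub t).const_mul K).const_add 1
      have hd2 := (hd1.inv h1.ne').const_mul (2/K)
      convert hd2 using 1
      show (2:ℝ) / (1 + K * (t - τ)) ^ 2 = 2/K * (-(K * (-1)) / (1 + K * (t - τ)) ^ 2)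
      field_simp
      rfl
      rfl
    have hpos2 : (0:ℝ) ≤ (2/K) * (1 + K*(t - t/2))⁻¹ := by
      have h7 : (0:ℝ) < 1 + K * (t - t/2) := by nlinarith
      positivity
    refine hmono.trans ?_
    rw [hFTC]
    simp only [sub_self, mul_zero, add_zero, inv_one, mul_one]
    linarith
  have h8 : (2:ℝ)/K + 2/K = 4/K := by ring
  linarith [hA, hB]

/-- A priori decay for solutions of the mode Volterra equation: there is a universal
constant `C₀` such that whenever `|α(t)| ≤ A/(1+t)`, `|β(t)| ≤ d/(1+Kt)²` with `C₀ d < K`,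
any continuous solution `ρ` of `ρ(t) = α(t) + ∫₀ᵗ β(t-τ)ρ(τ)dτ` satisfies
`|ρ(t)| ≤ M/(1+t)`. -/
theorem volterra_apriori_decay :
    ∃ C₀ : ℝ, 0 < C₀ ∧
      ∀ (K A d : ℝ), 1 ≤ K → 0 < A → 0 < d →
      ∀ (α β ρ : ℝ → ℂ),
        ContinuousOn α (Set.Ici (0 : ℝ)) →
        ContinuousOn β (Set.Ici (0 : ℝ)) →
        ContinuousOn ρ (Set.Ici (0 : ℝ)) →
        (∀ t : ℝ, 0 ≤ t → ‖α t‖ ≤ A / (1 + t)) →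
        (∀ t : ℝ, 0 ≤ t → ‖β t‖ ≤ d / (1 + K * t) ^ 2) →
        (∀ t : ℝ, 0 ≤ t → ρ t = α t + ∫ τ in (0 : ℝ)..t, β (t - τ) * ρ τ) →
        C₀ * d < K →
        ∃ M : ℝ, 0 < M ∧ ∀ t : ℝ, 0 ≤ t → ‖ρ t‖ ≤ M / (1 + t) := by
  refine ⟨4, by norm_num, ?_⟩
  intro K A d hK hA hd α β ρ hαc hβc hρc hαb hβb heq hCd
  have hK0 : (0:ℝ) < K := lt_of_lt_of_le one_pos hK
  set θ : ℝ := 4 * d / K with hθdef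
  have hθ0 : 0 < θ := by positivity
  have hθ1 : θ < 1 := by rw [hθdef, div_lt_one hK0]; linarith
  refine ⟨A / (1 - θ), div_pos hA (by linarith), ?_⟩
  intro T hT
  set g : ℝ → ℝ := fun s => (1 + s) * ‖ρ s‖ with hgdef
  have hgc : ContinuousOn g (Set.Icc 0 T) := by
    apply ContinuousOn.mul (by fun_prop)
    exact (hρc.mono Set.Icc_subset_Ici_self).norm
  obtain ⟨s₀, hs₀mem, hs₀max⟩ :=
    (isCompact_Icc : IsCompact (Set.Icc (0:ℝ) T)).exists_isMaxOn
      ⟨0, le_refl 0, hT⟩ hgc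
  set W : ℝ := g s₀ with hWdef
  have hWub : ∀ s ∈ Set.Icc (0:ℝ) T, g s ≤ W := hs₀max
  have hW0 : 0 ≤ W := by
    have := hWub 0 ⟨le_refl 0, hT⟩
    have h0 : (0:ℝ) ≤ g 0 := by
      simp only [hgdef]; positivity
    linarith
  have ht0 : (0:ℝ) ≤ s₀ := hs₀mem.1
  have htT : s₀ ≤ T := hs₀mem.2
  -- pointwise bound on ρ on [0, s₀]
  have hρnorm : ∀ τ ∈ Set.Icc (0:ℝ) s₀, ‖ρ τ‖ ≤ W / (1 + τ) := by
    intro τ hτ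
    have hτ0 : (0:ℝ) ≤ τ := hτ.1
    have h1 : (0:ℝ) < 1 + τ := by linarith
    have h2 : g τ ≤ W := hWub τ ⟨hτ0, le_trans hτ.2 htT⟩
    rw [le_div_iff₀ h1]
    calc ‖ρ τ‖ * (1 + τ) = g τ := by rw [hgdef]; ring
    _ ≤ W := h2
  -- key estimate at s₀
  have hkey : W ≤ A + θ * W := by
    have hden : ∀ τ ∈ Set.Icc (0:ℝ) s₀, (0:ℝ) < (1 + K * (s₀ - τ)) ^ 2 * (1 + τ) := by
      intro τ hτ
      have h1 : 0 ≤ s₀ - τ := by linarith [hτ.2]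
      have h2 : (0:ℝ) < 1 + K * (s₀ - τ) := by nlinarith
      have h3 : (0:ℝ) < 1 + τ := by linarith [hτ.1]
      positivity
    set b : ℝ → ℝ := fun τ => d / (1 + K * (s₀ - τ)) ^ 2 * (W / (1 + τ)) with hbdef
    have hbc : ContinuousOn b (Set.Icc 0 s₀) := by
      apply ContinuousOn.mul
      · apply ContinuousOn.div continuousOn_const (by fun_prop)
        intro τ hτ
        have h1 : 0 ≤ s₀ - τ := by linarith [hτ.2]
        have h2 : (0:ℝ) < 1 + K * (s₀ - τ) := by nlinarith
        positivity
      · apply ContinuousOn.div continuousOn_const (by fun_prop)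
        intro τ hτ
        have : (0:ℝ) < 1 + τ := by linarith [hτ.1]
        exact this.ne'
    have hbint : IntervalIntegrable b volume 0 s₀ := by
      apply ContinuousOn.intervalIntegrable
      rwa [Set.uIcc_of_le ht0]
    -- bound on the integral term
    have hIb : ‖∫ τ in (0:ℝ)..s₀, β (s₀ - τ) * ρ τ‖ ≤ ∫ τ in (0:ℝ)..s₀, b τ := by
      have hae : ∀ᵐ τ ∂(volume.restrict (Set.uIoc 0 s₀)), ‖β (s₀ - τ) * ρ τ‖ ≤ b τ := by
        rw [Set.uIoc_of_le ht0]
        refine (ae_restrict_iff' measurableSet_Ioc).2 (Filter.Eventually.of_forall ?_)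
        intro τ hτ
        have hτ0 : (0:ℝ) < τ := hτ.1
        have hτs : τ ≤ s₀ := hτ.2
        rw [norm_mul]
        apply mul_le_mul (hβb (s₀ - τ) (by linarith))
          (hρnorm τ ⟨hτ0.le, hτs⟩) (norm_nonneg _)
        have h2 : 0 ≤ s₀ - τ := by linarith
        have h3 : (0:ℝ) < 1 + K * (s₀ - τ) := by nlinarith
        positivity
      refine (intervalIntegral.norm_integral_le_abs_of_norm_le hae hbint).trans ?_
      rw [abs_of_nonneg]
      apply intervalIntegral.integral_nonneg ht0
      intro τ hτ
      have h1 : (0:ℝ) < 1 + τ := by linarith [hτ.1]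
      have h2 : 0 ≤ s₀ - τ := by linarith [hτ.2]
      have h3 : (0:ℝ) < 1 + K * (s₀ - τ) := by nlinarith
      positivity
    -- compute ∫ b in terms of the kernel integral
    have h1s : (0:ℝ) < 1 + s₀ := by linarith
    have hbeq : (∫ τ in (0:ℝ)..s₀, b τ)
        = (d * W / (1 + s₀)) * ∫ τ in (0:ℝ)..s₀, (1 + s₀) / ((1 + K * (s₀ - τ)) ^ 2 * (1 + τ)) := by
      rw [← intervalIntegral.integral_const_mul]
      apply intervalIntegral.integral_congr
      intro τ hτ
      rw [Set.uIcc_of_le ht0] at hτ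
      have h1 : (0:ℝ) < 1 + τ := by linarith [hτ.1]
      have h2 : 0 ≤ s₀ - τ := by linarith [hτ.2]
      have h3 : (0:ℝ) < 1 + K * (s₀ - τ) := by nlinarith
      show d / (1 + K * (s₀ - τ)) ^ 2 * (W / (1 + τ))
          = d * W / (1 + s₀) * ((1 + s₀) / ((1 + K * (s₀ - τ)) ^ 2 * (1 + τ)))
      field_simp
    have hker := volterra_kernel_integral_le K s₀ hK ht0
    have hble : (∫ τ in (0:ℝ)..s₀, b τ) ≤ θ * W / (1 + s₀) := by
      rw [hbeq]
      have hcoef : (0:ℝ) ≤ d * W / (1 + s₀) := by positivity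
      calc (d * W / (1 + s₀)) * ∫ τ in (0:ℝ)..s₀, (1 + s₀) / ((1 + K * (s₀ - τ)) ^ 2 * (1 + τ))
          ≤ (d * W / (1 + s₀)) * (4 / K) := mul_le_mul_of_nonneg_left hker hcoef
        _ = θ * W / (1 + s₀) := by rw [hθdef]; field_simp
    -- assemble
    have hρs : ‖ρ s₀‖ ≤ A / (1 + s₀) + θ * W / (1 + s₀) := by
      rw [heq s₀ ht0]
      calc ‖α s₀ + ∫ τ in (0:ℝ)..s₀, β (s₀ - τ) * ρ τ‖
          ≤ ‖α s₀‖ + ‖∫ τ in (0:ℝ)..s₀, β (s₀ - τ) * ρ τ‖ := norm_add_le _ _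
        _ ≤ A / (1 + s₀) + θ * W / (1 + s₀) :=
            add_le_add (hαb s₀ ht0) (hIb.trans hble)
    have := mul_le_mul_of_nonneg_left hρs (le_of_lt h1s)
    calc W = (1 + s₀) * ‖ρ s₀‖ := by rw [hWdef, hgdef]
      _ ≤ (1 + s₀) * (A / (1 + s₀) + θ * W / (1 + s₀)) := this
      _ = A + θ * W := by field_simp
  -- conclude
  have hWle : W ≤ A / (1 - θ) := by
    rw [le_div_iff₀ (by linarith)]
    nlinarith
  have hgT : g T ≤ W := hWub T ⟨hT, le_refl T⟩
  have h1T : (0:ℝ) < 1 + T := by linarith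
  rw [le_div_iff₀ h1T]
  calc ‖ρ T‖ * (1 + T) = g T := by rw [hgdef]; ring
    _ ≤ W := hgT
    _ ≤ A / (1 - θ) := hWle
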